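/- Let S be a left-cancellative left-amenable semigroup with Følner net (F_j)_{j∈J}, let K be a non-empty finite subset of S, and let T be a K-tiling of S. Define T_j := {t ∈ T : Kt ⊆ F_j}. Then there exist a real δ > 0 and an index j₀ such that |T_j| ≥ δ|F_j| for all j ≥ j₀. In fact one may take δ = 1/(4|K|²). -/

import Mathlib

open Filter Finset

set_option maxHeartbeats 1000000 in
/-- Let `S` be a left-cancellative semigroup with a Følner net `(F_j)`, let `K` be a
nonempty finite subset and `T` a `K`-tiling of `S`. Put `T_j = {t ∈ T : Kt ⊆ F_j}`.
Then, with `δ = 1/(4|K|²) > 0`, there is `j₀` with `|T_j| ≥ δ|F_j|` for all `j ≥ j₀`. -/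
theorem tiling_lower_density {S J : Type*} [Semigroup S] [DecidableEq S]
    [SemilatticeSup J] [Nonempty J]
    (hlc : ∀ s : S, Function.Injective (fun t : S => s * t))
    (F : J → Finset S) (hFne : ∀ j, (F j).Nonempty)
    (hFol : ∀ s : S, Filter.Tendsto
      (fun j => ((((F j).image (fun t : S => s * t)) \ F j).card : ℝ) / (F j).card)
      Filter.atTop (nhds 0))
    (K : Finset S) (hK : K.Nonempty) (T : Set S)
    (hT1 : ∀ t₁ ∈ T, ∀ t₂ ∈ T, t₁ ≠ t₂ →
      Disjoint ((fun k : S => k * t₁) '' (K : Set S)) ((fun k : S => k * t₂) '' (K : Set S)))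
    (hT2 : ∀ s : S, ∃ t ∈ T,
      (((fun k : S => k * s) '' (K : Set S)) ∩ ((fun k : S => k * t) '' (K : Set S))).Nonempty) :
    ∃ j₀ : J, ∀ j ≥ j₀,
      (Nat.card {t ∈ T | ∀ k ∈ K, k * t ∈ F j} : ℝ) ≥
        (1 / (4 * (K.card : ℝ) ^ 2)) * (F j).card := by
  classical
  obtain ⟨k₀, hk₀⟩ := hK
  -- preimage finsets: P k j = {t : k * t ∈ F j}
  have hPex : ∀ (k : S) (j : J), ∃ P : Finset S, ∀ t, t ∈ P ↔ k * t ∈ F j := by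
    intro k j
    exact ⟨(F j).preimage (fun t => k * t) ((hlc k).injOn), fun t => Finset.mem_preimage⟩
  choose P hPmem using hPex
  have hPcard : ∀ k j, (P k j).card ≤ (F j).card := by
    intro k j
    apply Finset.card_le_card_of_injOn (fun t => k * t)
    · intro t ht; exact (hPmem k j t).1 ht
    · exact (hlc k).injOn
  have hFP : ∀ k j, ((F j) \ P k j).card ≤ (((F j).image (fun t : S => k * t)) \ F j).card := by
    intro k j
    apply Finset.card_le_card_of_injOn (fun t => k * t)
    · intro t ht
      rw [Finset.mem_coe, Finset.mem_sdiff] at ht ⊢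
      exact ⟨Finset.mem_image_of_mem _ ht.1, fun h => ht.2 ((hPmem k j t).2 h)⟩
    · exact (hlc k).injOn
  have hPF : ∀ k j, (P k j \ F j).card ≤ ((F j) \ P k j).card := by
    intro k j
    have h1 := Finset.card_sdiff_add_card_inter (P k j) (F j)
    have h2 := Finset.card_sdiff_add_card_inter (F j) (P k j)
    have h3 : (P k j ∩ F j).card = (F j ∩ P k j).card := by rw [Finset.inter_comm]
    have h4 := hPcard k j
    omega
  -- covering function
  have key : ∀ s : S, ∃ t k₁ k₂, t ∈ T ∧ k₁ ∈ K ∧ k₂ ∈ K ∧ k₁ * s = k₂ * t := by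
    intro s
    obtain ⟨t, htT, x, hx⟩ := hT2 s
    obtain ⟨hx1, hx2⟩ := hx
    obtain ⟨k₁, hk₁, he₁⟩ := hx1
    obtain ⟨k₂, hk₂, he₂⟩ := hx2
    refine ⟨t, k₁, k₂, htT, hk₁, hk₂, ?_⟩
    have : k₁ * s = k₂ * t := by
      have h1 : k₁ * s = x := he₁
      have h2 : k₂ * t = x := he₂
      rw [h1, h2]
    exact this
  choose tf k1f k2f htf hk1f hk2f heqf using key
  -- constants
  set N : ℝ := (K.card : ℝ) with hN
  have hN1 : (1 : ℝ) ≤ N := by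
    have h : 1 ≤ K.card := Finset.card_pos.mpr ⟨k₀, hk₀⟩
    rw [hN]; exact_mod_cast h
  have hNpos : (0 : ℝ) < N := lt_of_lt_of_le one_pos hN1
  have hden : (0 : ℝ) < 2 * (N + 2 * N ^ 4) := by nlinarith [hN1, hNpos, pow_pos hNpos 4]
  set ε : ℝ := 1 / (2 * (N + 2 * N ^ 4)) with hε
  have hεpos : 0 < ε := by positivity
  -- eventual Følner bound
  have hev : ∀ᶠ j in atTop, ∀ k ∈ K,
      (((((F j).image (fun t : S => k * t)) \ F j).card : ℝ)) ≤ ε * (F j).card := by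
    rw [Filter.eventually_all_finset]
    intro k _
    have h := (hFol k).eventually (gt_mem_nhds hεpos)
    filter_upwards [h] with j hj
    have hc : (0:ℝ) < ((F j).card : ℝ) := by
      exact_mod_cast Finset.card_pos.mpr (hFne j)
    rw [div_lt_iff₀ hc] at hj
    exact le_of_lt hj
  obtain ⟨j₀, hj₀⟩ := Filter.eventually_atTop.mp hev
  refine ⟨j₀, fun j hj => ?_⟩
  have hbε := hj₀ j hj
  set c : ℝ := ((F j).card : ℝ) with hc
  have hc1 : (1 : ℝ) ≤ c := by
    have h : 1 ≤ (F j).card := Finset.card_pos.mpr (hFne j)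
    rw [hc]; exact_mod_cast h
  have hreal1 : ∀ k ∈ K, (((F j) \ P k j).card : ℝ) ≤ ε * c := by
    intro k hk
    exact le_trans (by exact_mod_cast hFP k j) (hbε k hk)
  have hreal2 : ∀ k ∈ K, ((P k j \ F j).card : ℝ) ≤ ε * c := by
    intro k hk
    exact le_trans (by exact_mod_cast hPF k j) (hreal1 k hk)
  -- the three finsets
  set Hj : Finset S := (F j).filter (fun s => ∀ k ∈ K, k * s ∈ F j) with hHj
  set CT : Finset S := (K.biUnion (fun k => P k j)).filter (fun t => t ∈ T) with hCT
  set Tj : Finset S := CT.filter (fun t => ∀ k ∈ K, k * t ∈ F j) with hTj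
  -- Step 4 : F j mostly consists of Hj
  have h4 : (F j).card ≤ Hj.card + ∑ k ∈ K, ((F j) \ P k j).card := by
    have hsub : (F j) \ Hj ⊆ K.biUnion (fun k => (F j) \ P k j) := by
      intro s hs
      rw [Finset.mem_sdiff] at hs
      obtain ⟨hsF, hsn⟩ := hs
      have : ¬ ∀ k ∈ K, k * s ∈ F j := by
        intro hall; exact hsn (Finset.mem_filter.mpr ⟨hsF, hall⟩)
      push_neg at this
      obtain ⟨k, hk, hks⟩ := this
      exact Finset.mem_biUnion.mpr ⟨k, hk,
        Finset.mem_sdiff.mpr ⟨hsF, fun h => hks ((hPmem k j s).1 h)⟩⟩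
    have h1 : ((F j) \ Hj).card + Hj.card = (F j).card :=
      Finset.card_sdiff_add_card_eq_card (Finset.filter_subset _ _)
    have h2 : ((F j) \ Hj).card ≤ ∑ k ∈ K, ((F j) \ P k j).card :=
      le_trans (Finset.card_le_card hsub) Finset.card_biUnion_le
    omega
  -- Step 5 : injection Hj → K × K × CT
  have h5 : Hj.card ≤ (K ×ˢ K ×ˢ CT).card := by
    apply Finset.card_le_card_of_injOn (fun s => (k1f s, k2f s, tf s))
    · intro s hs
      rw [Finset.mem_coe, hHj, Finset.mem_filter] at hs
      refine Finset.mem_product.mpr ⟨hk1f s, Finset.mem_product.mpr ⟨hk2f s, ?_⟩⟩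
      rw [hCT, Finset.mem_filter]
      refine ⟨Finset.mem_biUnion.mpr ⟨k2f s, hk2f s, ?_⟩, htf s⟩
      rw [hPmem, ← heqf s]
      exact hs.2 _ (hk1f s)
    · intro s _ s' _ h
      simp only [Prod.mk.injEq] at h
      apply hlc (k1f s)
      show k1f s * s = k1f s * s'
      rw [heqf s, h.2.1, h.2.2, ← heqf s', ← h.1]
  have h5' : (K ×ˢ K ×ˢ CT).card = K.card * (K.card * CT.card) := by
    simp [Finset.card_product]
  -- Step 6 : tiles meeting F j but not inside are few
  have hsub6 : CT \ Tj ⊆ K.biUnion (fun k => K.biUnion (fun k' =>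
      (P k j \ F j) ∪ ((F j) \ P k' j))) := by
    intro t ht
    rw [Finset.mem_sdiff] at ht
    obtain ⟨htCT, htn⟩ := ht
    have h1 := htCT
    rw [hCT, Finset.mem_filter, Finset.mem_biUnion] at h1
    obtain ⟨⟨k, hk, hkP⟩, htT'⟩ := h1
    have : ¬ ∀ k ∈ K, k * t ∈ F j := by
      intro hall; exact htn (Finset.mem_filter.mpr ⟨htCT, hall⟩)
    push_neg at this
    obtain ⟨k', hk', hk't⟩ := this
    refine Finset.mem_biUnion.mpr ⟨k, hk, Finset.mem_biUnion.mpr ⟨k', hk', ?_⟩⟩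
    by_cases hF : t ∈ F j
    · exact Finset.mem_union_right _
        (Finset.mem_sdiff.mpr ⟨hF, fun h => hk't ((hPmem k' j t).1 h)⟩)
    · exact Finset.mem_union_left _ (Finset.mem_sdiff.mpr ⟨hkP, hF⟩)
  have h6 : (CT \ Tj).card ≤ ∑ k ∈ K, ∑ k' ∈ K,
      ((P k j \ F j).card + ((F j) \ P k' j).card) := by
    calc (CT \ Tj).card
        ≤ (K.biUnion (fun k => K.biUnion (fun k' =>
            (P k j \ F j) ∪ ((F j) \ P k' j)))).card := Finset.card_le_card hsub6
      _ ≤ ∑ k ∈ K, (K.biUnion (fun k' => (P k j \ F j) ∪ ((F j) \ P k' j))).card :=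
          Finset.card_biUnion_le
      _ ≤ ∑ k ∈ K, ∑ k' ∈ K, ((P k j \ F j) ∪ ((F j) \ P k' j)).card :=
          Finset.sum_le_sum (fun k _ => Finset.card_biUnion_le)
      _ ≤ ∑ k ∈ K, ∑ k' ∈ K, ((P k j \ F j).card + ((F j) \ P k' j).card) :=
          Finset.sum_le_sum (fun k _ => Finset.sum_le_sum (fun k' _ =>
            Finset.card_union_le _ _))
  have hCTsplit : (CT \ Tj).card + Tj.card = CT.card :=
    Finset.card_sdiff_add_card_eq_card (Finset.filter_subset _ _)
  -- transfer to ℝ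
  have H4 : c ≤ (Hj.card : ℝ) + N * (ε * c) := by
    have hsum : ((∑ k ∈ K, ((F j) \ P k j).card : ℕ) : ℝ) ≤ N * (ε * c) := by
      push_cast
      calc ∑ k ∈ K, ((((F j) \ P k j).card : ℝ))
          ≤ ∑ _k ∈ K, ε * c := Finset.sum_le_sum hreal1
        _ = N * (ε * c) := by rw [Finset.sum_const, nsmul_eq_mul]
    have h4' : (c : ℝ) ≤ (Hj.card : ℝ) + ((∑ k ∈ K, ((F j) \ P k j).card : ℕ) : ℝ) := by
      rw [hc]; exact_mod_cast h4
    linarith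
  have H5 : (Hj.card : ℝ) ≤ N * (N * CT.card) := by
    have h := h5
    rw [h5'] at h
    rw [hN]
    exact_mod_cast h
  have H6 : ((CT \ Tj).card : ℝ) ≤ N * (N * (2 * (ε * c))) := by
    have hsum : ((∑ k ∈ K, ∑ k' ∈ K,
        ((P k j \ F j).card + ((F j) \ P k' j).card) : ℕ) : ℝ) ≤ N * (N * (2 * (ε * c))) := by
      push_cast
      calc ∑ k ∈ K, ∑ k' ∈ K, ((((P k j \ F j).card : ℝ)) + (((F j) \ P k' j).card : ℝ))
          ≤ ∑ _k ∈ K, ∑ _k' ∈ K, (ε * c + ε * c) := by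
            refine Finset.sum_le_sum (fun k hk => Finset.sum_le_sum (fun k' hk' => ?_))
            exact add_le_add (hreal2 k hk) (hreal1 k' hk')
        _ = N * (N * (2 * (ε * c))) := by
            rw [Finset.sum_const, Finset.sum_const, nsmul_eq_mul, nsmul_eq_mul]
            ring
    exact le_trans (by exact_mod_cast h6) hsum
  have HCT : (CT.card : ℝ) = ((CT \ Tj).card : ℝ) + (Tj.card : ℝ) := by
    exact_mod_cast hCTsplit.symm
  -- main chain
  have hmain : c ≤ N ^ 2 * (Tj.card : ℝ) + (2 * N ^ 4 + N) * (ε * c) := by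
    nlinarith [H4, H5, H6, HCT, hNpos, hεpos, hc1]
  have hεeq : (2 * N ^ 4 + N) * ε = 1 / 2 := by
    rw [hε]
    field_simp
    ring
  have hTjbound : c / 2 ≤ N ^ 2 * (Tj.card : ℝ) := by
    have : (2 * N ^ 4 + N) * (ε * c) = c / 2 := by
      rw [← mul_assoc, hεeq]; ring
    linarith
  -- identify the set with Tj
  have hset : {t ∈ T | ∀ k ∈ K, k * t ∈ F j} = (Tj : Set S) := by
    ext t
    simp only [Set.mem_setOf_eq, Finset.mem_coe, hTj, hCT, Finset.mem_filter,
      Finset.mem_biUnion]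
    constructor
    · rintro ⟨htT, hall⟩
      exact ⟨⟨⟨k₀, hk₀, (hPmem k₀ j t).2 (hall k₀ hk₀)⟩, htT⟩, hall⟩
    · rintro ⟨⟨_, htT⟩, hall⟩
      exact ⟨htT, hall⟩
  have hcard : (Nat.card {t ∈ T | ∀ k ∈ K, k * t ∈ F j}) = Tj.card := by
    rw [hset]
    simp [Nat.card_coe_set_eq, Set.ncard_coe_finset]
  rw [hcard]
  have hN2 : (0:ℝ) < N ^ 2 := by positivity
  rw [ge_iff_le, hN]
  rw [div_mul_eq_mul_div, one_mul, div_le_iff₀ (by positivity)]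
  nlinarith [hTjbound, hc1]
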